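/- Let r = r₁,…,rₙ be a sequence of elements in a commutative ring R and φ: R → S a faithfully flat ring homomorphism. If φ(r₁),…,φ(rₙ) is a regular sequence in S, then r₁,…,rₙ is a regular sequence in R. -/

import Mathlib

open RingTheory.Sequence

/-- A ring homomorphism `φ : R →+* S` is faithfully flat if it makes `S` into a
faithfully flat `R`-module (flat and faithful: `S ⊗_R M ≠ 0` for nonzero `M`). -/
def RingHom.FaithfullyFlatHom {R : Type*} {S : Type*} [CommRing R] [CommRing S]
    (φ : R →+* S) : Prop :=
  letI : Algebra R S := φ.toAlgebra
  Module.FaithfullyFlat R S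

open scoped TensorProduct

/-- Faithfully flat modules reflect smul-regularity. -/
lemma isSMulRegular_of_lTensor {R N M : Type*} [CommRing R] [AddCommGroup N] [Module R N]
    [AddCommGroup M] [Module R M] [Module.FaithfullyFlat R N] {r : R}
    (h : IsSMulRegular (N ⊗[R] M) r) : IsSMulRegular M r := by
  set f : M →ₗ[R] M := DistribSMul.toLinearMap R M r with hf
  have hinj : Function.Injective (f.lTensor N) := by
    rw [hf, LinearMap.lTensor_smul_action]
    exact h
  have hsub : (LinearMap.ker f).subtype = 0 := by
    rw [Module.FaithfullyFlat.zero_iff_lTensor_zero R N]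
    have hcomp : (f.lTensor N).comp ((LinearMap.ker f).subtype.lTensor N) = 0 := by
      rw [← LinearMap.lTensor_comp]
      have h0 : f.comp (LinearMap.ker f).subtype = 0 := by
        ext x; exact x.2
      rw [h0, LinearMap.lTensor_zero]
    refine LinearMap.ext fun w => hinj ?_
    have := LinearMap.congr_fun hcomp w
    simpa using this
  intro x y hxy
  have : f (x - y) = 0 := by
    simp only [hf, DistribSMul.toLinearMap_apply, smul_sub]
    rw [sub_eq_zero]; exact hxy
  have hz := congrFun (congrArg DFunLike.coe hsub) ⟨x - y, this⟩
  simpa [sub_eq_zero] using hz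

/-- Faithfully flat modules reflect weak regularity of sequences. -/
theorem isWeaklyRegular_of_lTensor {R N : Type*} [CommRing R] [AddCommGroup N] [Module R N]
    [Module.FaithfullyFlat R N] (rs : List R) :
    ∀ (M : Type*) [AddCommGroup M] [Module R M],
      IsWeaklyRegular (N ⊗[R] M) rs → IsWeaklyRegular M rs := by
  induction rs with
  | nil => intro M _ _ _; exact IsWeaklyRegular.nil R M
  | cons r rs ih =>
    intro M _ _ h
    rw [isWeaklyRegular_cons_iff] at h ⊢
    obtain ⟨h1, h2⟩ := h
    refine ⟨isSMulRegular_of_lTensor h1, ih _ ?_⟩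
    exact ((QuotSMulTop.tensorQuotSMulTopEquivQuotSMulTop r N M).isWeaklyRegular_congr rs).mpr h2

/-- If φ : R → S is faithfully flat and φ(r₁),…,φ(rₙ) is a regular
sequence in S, then r₁,…,rₙ is a regular sequence in R. -/
theorem isWeaklyRegular_of_map_faithfullyFlat {R S : Type*} [CommRing R] [CommRing S]
    (φ : R →+* S) (hφ : φ.FaithfullyFlatHom) (rs : List R)
    (h : IsWeaklyRegular S (rs.map φ)) : IsWeaklyRegular R rs := by
  letI : Algebra R S := φ.toAlgebra
  haveI : Module.FaithfullyFlat R S := hφ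
  have h' : IsWeaklyRegular S rs := by
    have : rs.map φ = rs.map (algebraMap R S) := rfl
    rw [this] at h
    exact (isWeaklyRegular_map_algebraMap_iff (R := R) (S := S) (M := S) rs).mp h
  have e : S ⊗[R] R ≃ₗ[R] S := TensorProduct.rid R S
  exact isWeaklyRegular_of_lTensor rs R ((e.isWeaklyRegular_congr rs).mpr h')
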